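/- Let M be a finite left regular band of groups with set of idempotents B. Then: (i) the map ψ : M → B sending each m ∈ M to its unique idempotent power m^ω is a surjective monoid homomorphism fixing B pointwise; (ii) if K is a field whose characteristic does not divide the order of the group of units of eMe for any idempotent e of M, then the monoid algebra KB, regarded as a KM-module via the K-algebra homomorphism KM → KB induced by ψ, is a projective KM-module. -/

import Mathlib

namespace Stmt17Aux

variable {M : Type} [Monoid M]

/-- right-ideal set -/
def rs (a : M) : Set M := {x : M | ∃ y : M, x = a * y}

theorem rs_def (a : M) : rs a = {x : M | ∃ y : M, x = a * y} := rfl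

theorem lrb (hld : ∀ m x : M, ∃ y : M, m * x = y * m)
    (e f : M) (he : e * e = e) : e * f * e = e * f := by
  obtain ⟨y, hy⟩ := hld e f
  rw [hy, mul_assoc, he]

theorem idem_mul (hld : ∀ m x : M, ∃ y : M, m * x = y * m)
    {e f : M} (he : IsIdempotentElem e) (hf : IsIdempotentElem f) :
    IsIdempotentElem (e * f) := by
  have h1 : f * e * f = f * e := lrb hld f e hf
  have : e * f * (e * f) = e * (f * e * f) := by
    simp [mul_assoc]
  rw [h1] at this
  have h2 : e * (f * e) = e * f * e := by rw [mul_assoc]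
  rw [h2, lrb hld e f he] at this
  exact this

theorem R_sq (hreg : ∀ a : M, ∃ x : M, a * x * a = a)
    (hR : ∀ a b c : M, rs a = rs b → rs (a * c) = rs (b * c))
    (a : M) : rs a = rs (a * a) := by
  obtain ⟨x, hx⟩ := hreg a
  have hae : rs a = rs (a * x) := by
    ext u
    constructor
    · rintro ⟨y, rfl⟩
      exact ⟨a * y, by rw [← mul_assoc, hx]⟩
    · rintro ⟨y, rfl⟩
      exact ⟨x * y, by rw [← mul_assoc]⟩
  have := hR a (a * x) a hae
  rw [hx] at this
  exact this.symm

theorem R_pow (hreg : ∀ a : M, ∃ x : M, a * x * a = a)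
    (hR : ∀ a b c : M, rs a = rs b → rs (a * c) = rs (b * c))
    (a : M) : ∀ n : ℕ, 1 ≤ n → rs a = rs (a ^ n) := by
  intro n hn
  induction n with
  | zero => omega
  | succ k ih =>
    rcases Nat.eq_or_lt_of_le hn with h | h
    · simp [← h]
    · have hk : 1 ≤ k := by omega
      have h1 := ih hk
      have h2 := hR a (a ^ k) a h1
      rw [pow_succ]
      rw [← h2, ← R_sq hreg hR a]

theorem R_left (a : M) {x y : M} (h : rs x = rs y) : rs (a * x) = rs (a * y) := by
  ext u
  constructor
  · rintro ⟨v, rfl⟩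
    have : x * v ∈ rs y := by rw [← h]; exact ⟨v, rfl⟩
    obtain ⟨v', hv'⟩ := this
    exact ⟨v', by rw [mul_assoc, hv', mul_assoc]⟩
  · rintro ⟨v, rfl⟩
    have : y * v ∈ rs x := by rw [h]; exact ⟨v, rfl⟩
    obtain ⟨v', hv'⟩ := this
    exact ⟨v', by rw [mul_assoc, hv', mul_assoc]⟩

theorem idem_R_eq (hld : ∀ m x : M, ∃ y : M, m * x = y * m)
    {e f : M} (he : IsIdempotentElem e) (hf : IsIdempotentElem f)
    (h : rs e = rs f) : e = f := by
  have h1 : f ∈ rs e := by rw [h]; exact ⟨1, by simp⟩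
  have h2 : e ∈ rs f := by rw [← h]; exact ⟨1, by simp⟩
  obtain ⟨u, hu⟩ := h1
  obtain ⟨v, hv⟩ := h2
  have hef : e * f = f := by rw [hu, ← mul_assoc, he]
  have hfe : f * e = e := by rw [hv, ← mul_assoc, hf]
  have h3 := lrb hld e f he
  rw [hef] at h3
  -- h3 : f * e = f ;  hfe : f * e = e
  rw [← h3, hfe]

section W

variable (hreg : ∀ a : M, ∃ x : M, a * x * a = a)
  (hld : ∀ m x : M, ∃ y : M, m * x = y * m)
  (hR : ∀ a b c : M, rs a = rs b → rs (a * c) = rs (b * c))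
  (w : M → M)
  (hw : ∀ m : M, ∃ n : ℕ, 1 ≤ n ∧ w m = m ^ n ∧ IsIdempotentElem (w m))

include hreg hR hw in
theorem R_w (a : M) : rs a = rs (w a) := by
  obtain ⟨n, hn, hwn, _⟩ := hw a
  rw [hwn]
  exact R_pow hreg hR a n hn

include hreg hR hw in
theorem w_mul_left (a : M) : w a * a = a := by
  have h := R_w hreg hR w hw a
  have ha : a ∈ rs (w a) := by rw [← h]; exact ⟨1, by simp⟩
  obtain ⟨t, ht⟩ := ha
  obtain ⟨n, hn, hwn, hidem⟩ := hw a
  calc w a * a = w a * (w a * t) := by rw [← ht]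
    _ = w a * w a * t := by rw [mul_assoc]
    _ = w a * t := by rw [hidem]
    _ = a := ht.symm

include hreg hR hw in
theorem w_mul_right (a : M) : a * w a = a := by
  obtain ⟨n, hn, hwn, _⟩ := hw a
  have : a * w a = w a * a := by
    rw [hwn, ← pow_succ, ← pow_succ']
  rw [this]
  exact w_mul_left hreg hR w hw a

theorem pow_idem {e : M} (he : IsIdempotentElem e) :
    ∀ n : ℕ, 1 ≤ n → e ^ n = e := by
  intro n hn
  induction n with
  | zero => omega
  | succ k ih =>
    rcases Nat.eq_or_lt_of_le hn with h | h
    · rw [← h, pow_one]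
    · rw [pow_succ, ih (by omega), he]

include hw in
theorem w_fix {e : M} (he : IsIdempotentElem e) : w e = e := by
  obtain ⟨n, hn, hwn, _⟩ := hw e
  rw [hwn, pow_idem he n hn]

include hw in
theorem w_idem (a : M) : IsIdempotentElem (w a) := by
  obtain ⟨n, hn, hwn, hid⟩ := hw a
  exact hid

include hreg hld hR hw in
theorem w_mul (a b : M) : w (a * b) = w a * w b := by
  have h1 : rs (a * b) = rs (w a * b) := hR a (w a) b (R_w hreg hR w hw a)
  have h2 : rs (w a * b) = rs (w a * w b) := R_left (w a) (R_w hreg hR w hw b)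
  have h3 : rs (a * b) = rs (w (a * b)) := R_w hreg hR w hw (a * b)
  exact idem_R_eq hld (w_idem w hw (a*b)) (idem_mul hld (w_idem w hw a) (w_idem w hw b))
    (h3.symm.trans (h1.trans h2))

include hreg hld hR hw in
theorem w_const_pow (a : M) (k : ℕ) (hk : 1 ≤ k) : w (a ^ k) = w a := by
  have h1 : rs (a ^ k) = rs (w (a ^ k)) := R_w hreg hR w hw (a ^ k)
  have h2 : rs a = rs (a ^ k) := R_pow hreg hR a k hk
  have h3 : rs a = rs (w a) := R_w hreg hR w hw a
  exact idem_R_eq hld (w_idem w hw (a ^ k)) (w_idem w hw a)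
    (h1.symm.trans (h2.symm.trans h3))

include hreg hld hR hw in
theorem w_inv (x : M) : ∃ x' : M, w x' = w x ∧ x' * x = w x ∧ x * x' = w x := by
  obtain ⟨n, hn, hwn, hid⟩ := hw x
  refine ⟨x ^ (2 * n - 1), ?_, ?_, ?_⟩
  · exact w_const_pow hreg hld hR w hw x (2 * n - 1) (by omega)
  · rw [← pow_succ]
    have : 2 * n - 1 + 1 = 2 * n := by omega
    rw [this, two_mul, pow_add, ← hwn, hid]
  · rw [← pow_succ']
    have : 2 * n - 1 + 1 = 2 * n := by omega
    rw [this, two_mul, pow_add, ← hwn, hid]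

include hreg hld hR hw in
theorem memU_iff {e : M} (he : IsIdempotentElem e) (x : M) :
    (e * x * e = x ∧ ∃ y : M, e * y * e = y ∧ x * y = e ∧ y * x = e) ↔ w x = e := by
  constructor
  · rintro ⟨hx, y, hy, hxy, hyx⟩
    have hxe : rs x = rs e := by
      ext u
      constructor
      · rintro ⟨v, rfl⟩
        exact ⟨x * e * v, by rw [show e * (x * e * v) = e * x * e * v by simp [mul_assoc], hx]⟩
      · rintro ⟨v, rfl⟩
        exact ⟨y * v, by rw [show x * (y * v) = x * y * v by rw [mul_assoc], hxy]⟩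
    exact idem_R_eq hld (w_idem w hw x) he
      ((R_w hreg hR w hw x).symm.trans hxe)
  · intro hwx
    have h1 : e * x = x := by rw [← hwx]; exact w_mul_left hreg hR w hw x
    have h2 : x * e = x := by rw [← hwx]; exact w_mul_right hreg hR w hw x
    obtain ⟨x', hwx', h3, h4⟩ := w_inv hreg hld hR w hw x
    refine ⟨by rw [h1, h2], x', ?_, by rw [h4, hwx], by rw [h3, hwx]⟩
    rw [hwx] at hwx'
    have h5 : e * x' = x' := by rw [← hwx']; exact w_mul_left hreg hR w hw x'
    have h6 : x' * e = x' := by rw [← hwx']; exact w_mul_right hreg hR w hw x'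
    rw [h5, h6]

end W

def Good : List M → Prop
  | [] => True
  | h :: t => IsIdempotentElem h ∧ (∀ e ∈ t, e * h ∈ t) ∧ Good t

theorem good_mem_idem {l : List M} (hl : Good l) : ∀ e ∈ l, IsIdempotentElem e := by
  induction l with
  | nil => simp
  | cons h t ih =>
    intro e he
    rcases List.mem_cons.mp he with rfl | ht
    · exact hl.1
    · exact ih hl.2.2 e ht

open Classical in
noncomputable def kappa [Fintype M] (e : M) : ℕ :=
  (Finset.univ.filter (fun f => IsIdempotentElem f ∧ e * f = f)).card

open Classical in
theorem kappa_mul_le [Fintype M] {e : M} (f : M) (he : IsIdempotentElem e) :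
    kappa (e * f) ≤ kappa e := by
  classical
  apply Finset.card_le_card
  intro x hx
  simp only [Finset.mem_filter, Finset.mem_univ, true_and] at hx ⊢
  refine ⟨hx.1, ?_⟩
  have h2 : e * (e * f * x) = e * f * x := by rw [← mul_assoc, ← mul_assoc, he]
  rw [← hx.2]
  exact h2

theorem lemY [Fintype M] (hld : ∀ m x : M, ∃ y : M, m * x = y * m)
    {e f : M} (he : IsIdempotentElem e) (hf : IsIdempotentElem f)
    (hk : kappa e ≤ kappa (e * f)) : e * f = e := by
  classical
  have hsub : (Finset.univ.filter (fun x => IsIdempotentElem x ∧ (e * f) * x = x)) ⊆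
      (Finset.univ.filter (fun x => IsIdempotentElem x ∧ e * x = x)) := by
    intro x hx
    simp only [Finset.mem_filter, Finset.mem_univ, true_and] at hx ⊢
    refine ⟨hx.1, ?_⟩
    have h2 : e * (e * f * x) = e * f * x := by rw [← mul_assoc, ← mul_assoc, he]
    rw [← hx.2]
    exact h2
  have heq := Finset.eq_of_subset_of_card_le hsub hk
  have hem : e ∈ (Finset.univ.filter (fun x => IsIdempotentElem x ∧ (e * f) * x = x)) := by
    rw [heq]
    simp only [Finset.mem_filter, Finset.mem_univ, true_and]
    exact ⟨he, he⟩
  simp only [Finset.mem_filter, Finset.mem_univ, true_and] at hem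
  have h2 := lrb hld e f he
  rw [hem.2] at h2
  exact h2.symm

theorem exists_good_list [Fintype M] (hld : ∀ m x : M, ∃ y : M, m * x = y * m) :
    ∃ l : List M, Good l ∧ ∀ e : M, IsIdempotentElem e → e ∈ l := by
  classical
  suffices H : ∀ (n : ℕ) (S : Finset M), S.card ≤ n → (∀ e ∈ S, IsIdempotentElem e) →
      (∀ e ∈ S, ∀ f ∈ S, e * f ∈ S) → ∃ l : List M, Good l ∧ ∀ x : M, x ∈ l ↔ x ∈ S by
    obtain ⟨l, hg, hm⟩ := H (Finset.univ.filter (fun e => IsIdempotentElem e)).card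
      (Finset.univ.filter (fun e => IsIdempotentElem e)) le_rfl
      (by intro e he; simpa using (Finset.mem_filter.mp he).2)
      (by
        intro e he f hf
        simp only [Finset.mem_filter, Finset.mem_univ, true_and] at he hf ⊢
        exact idem_mul hld he hf)
    exact ⟨l, hg, fun e he => (hm e).mpr (by simpa using he)⟩
  intro n
  induction n with
  | zero =>
    intro S hcard _ _
    refine ⟨[], trivial, fun x => ?_⟩
    simp only [List.not_mem_nil, false_iff]
    intro hx
    have : S = ∅ := Finset.card_eq_zero.mp (Nat.le_zero.mp hcard)
    rw [this] at hx
    exact absurd hx (Finset.notMem_empty x)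
  | succ k ih =>
    intro S hcard hidem hclosed
    rcases S.eq_empty_or_nonempty with rfl | hne
    · exact ⟨[], trivial, by simp⟩
    obtain ⟨h, hhS, hmax⟩ := Finset.exists_max_image S kappa hne
    have hprod_ne : ∀ e ∈ S, ∀ f ∈ S, e * f = h → e = h := by
      intro e heS f hfS hef
      have h1 : kappa e ≤ kappa (e * f) := by rw [hef]; exact hmax e heS
      have h2 := lemY hld (hidem e heS) (hidem f hfS) h1
      rw [h2] at hef
      exact hef
    have hS'card : (S.erase h).card ≤ k := by
      have := Finset.card_erase_of_mem hhS
      omega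
    obtain ⟨l', hg', hm'⟩ := ih (S.erase h) hS'card
      (fun e he => hidem e (Finset.mem_of_mem_erase he))
      (by
        intro e he f hf
        have heS := Finset.mem_of_mem_erase he
        have hfS := Finset.mem_of_mem_erase hf
        refine Finset.mem_erase.mpr ⟨?_, hclosed e heS f hfS⟩
        intro hef
        exact (Finset.mem_erase.mp he).1 (hprod_ne e heS f hfS hef))
    refine ⟨h :: l', ⟨hidem h hhS, ?_, hg'⟩, ?_⟩
    · intro e hel'
      have heS' := (hm' e).mp hel'
      have heS := Finset.mem_of_mem_erase heS'
      apply (hm' (e * h)).mpr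
      refine Finset.mem_erase.mpr ⟨?_, hclosed e heS h hhS⟩
      intro hef
      exact (Finset.mem_erase.mp heS').1 (hprod_ne e heS h hhS hef)
    · intro x
      rw [List.mem_cons, hm', Finset.mem_erase]
      constructor
      · rintro (rfl | ⟨_, hx⟩)
        · exact hhS
        · exact hx
      · intro hxS
        by_cases hxh : x = h
        · exact Or.inl hxh
        · exact Or.inr ⟨hxh, hxS⟩


section Alg

variable (K : Type) [Field K] [Fintype M]

open MonoidAlgebra

open Classical in
noncomputable def Ge (w : M → M) (e : M) : Finset M :=
  Finset.univ.filter (fun g => w g = e)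

open Classical in
theorem mem_Ge {w : M → M} {e g : M} : g ∈ Ge w e ↔ w g = e := by
  classical
  simp [Ge]

noncomputable def eps (w : M → M) (e : M) : MonoidAlgebra K M :=
  (((Ge w e).card : K))⁻¹ • ∑ g ∈ Ge w e, MonoidAlgebra.of K M g

noncomputable def fct (w : M → M) (e : M) : MonoidAlgebra K M :=
  1 - MonoidAlgebra.of K M e + eps K w e

noncomputable def pia (w : M → M) (l : List M) : MonoidAlgebra K M :=
  (l.map (fct K w)).prod

variable (hreg : ∀ a : M, ∃ x : M, a * x * a = a)
  (hld : ∀ m x : M, ∃ y : M, m * x = y * m)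
  (hR : ∀ a b c : M, rs a = rs b → rs (a * c) = rs (b * c))
  (w : M → M)
  (hw : ∀ m : M, ∃ n : ℕ, 1 ≤ n ∧ w m = m ^ n ∧ IsIdempotentElem (w m))

include hreg hld hR hw in
theorem of_mul_sum_Ge (x : M) (e : M) (hx : w x = e) :
    ∑ g ∈ Ge w e, MonoidAlgebra.of K M (x * g) = ∑ g ∈ Ge w e, MonoidAlgebra.of K M g := by
  obtain ⟨x', hwx', hx'x, hxx'⟩ := w_inv hreg hld hR w hw x
  rw [hx] at hwx' hx'x hxx'
  have hee : e * e = e := hx ▸ w_idem w hw x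
  refine Finset.sum_nbij' (fun g => x * g) (fun g => x' * g) ?_ ?_ ?_ ?_ ?_
  · intro g hg
    rw [mem_Ge] at hg ⊢
    rw [w_mul hreg hld hR w hw, hx, hg, hee]
  · intro g hg
    rw [mem_Ge] at hg ⊢
    rw [w_mul hreg hld hR w hw, hwx', hg, hee]
  · intro g hg
    rw [mem_Ge] at hg
    have heg : e * g = g := by
      conv_rhs => rw [← w_mul_left hreg hR w hw g, hg]
    show x' * (x * g) = g
    rw [← mul_assoc, hx'x, heg]
  · intro g hg
    rw [mem_Ge] at hg
    have heg : e * g = g := by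
      conv_rhs => rw [← w_mul_left hreg hR w hw g, hg]
    show x * (x' * g) = g
    rw [← mul_assoc, hxx', heg]
  · intro g hg
    rfl


include hreg hld hR hw in
theorem of_mul_fct (x e : M) (hx : w x = e) :
    MonoidAlgebra.of K M x * fct K w e = eps K w e := by
  have hxe : x * e = x := by rw [← hx]; exact w_mul_right hreg hR w hw x
  unfold fct eps
  rw [mul_add, mul_sub, mul_one, ← map_mul, hxe, mul_smul_comm, Finset.mul_sum]
  simp only [← map_mul]
  rw [of_mul_sum_Ge K hreg hld hR w hw x e hx]
  rw [sub_self, zero_add]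

include hreg hld hR hw in
theorem pia_absorb (hc : ∀ e : M, IsIdempotentElem e → ((Ge w e).card : K) ≠ 0) :
    ∀ l : List M, Good l → ∀ x y : M, w x = w y → w x ∈ l →
      MonoidAlgebra.of K M x * pia K w l = MonoidAlgebra.of K M y * pia K w l := by
  intro l
  induction l with
  | nil => intro _ x y _ hm; simp at hm
  | cons h t ih =>
    intro hg x y hxy hmem
    have hpia : pia K w (h :: t) = fct K w h * pia K w t := by
      unfold pia; rw [List.map_cons, List.prod_cons]
    by_cases hxh : w x = h
    · rw [hpia, ← mul_assoc, ← mul_assoc, of_mul_fct K hreg hld hR w hw x h hxh,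
        of_mul_fct K hreg hld hR w hw y h (by rw [← hxy]; exact hxh)]
    · have hmem' : w x ∈ t := by
        rcases List.mem_cons.mp hmem with h1 | h1
        · exact absurd h1 hxh
        · exact h1
      have hidh : IsIdempotentElem h := hg.1
      have hwh : w h = h := w_fix w hw hidh
      have hidwx : IsIdempotentElem (w x) := w_idem w hw x
      have hwwx : w (w x) = w x := w_fix w hw hidwx
      have hwxh_idem : IsIdempotentElem (w x * h) := idem_mul hld hidwx hidh
      have hwxh_fix : w (w x * h) = w x * h := w_fix w hw hwxh_idem
      have hmemt : w x * h ∈ t := hg.2.1 (w x) hmem'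
      have key : ∀ z : M, w z = w x →
          MonoidAlgebra.of K M z * pia K w (h :: t) = MonoidAlgebra.of K M (w x) * pia K w t := by
        intro z hz
        have ihz : MonoidAlgebra.of K M z * pia K w t = MonoidAlgebra.of K M (w x) * pia K w t :=
          ih hg.2.2 z (w x) (by rw [hz, hwwx]) (by rw [hz]; exact hmem')
        have ihzh : ∀ u : M, w u = w x * h →
            MonoidAlgebra.of K M u * pia K w t = MonoidAlgebra.of K M (w x * h) * pia K w t :=
          fun u hu => ih hg.2.2 u (w x * h) (by rw [hu, hwxh_fix]) (by rw [hu]; exact hmemt)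
        have hexp : MonoidAlgebra.of K M z * fct K w h = MonoidAlgebra.of K M z
            - MonoidAlgebra.of K M (z * h)
            + ((Ge w h).card : K)⁻¹ • ∑ g ∈ Ge w h, MonoidAlgebra.of K M (z * g) := by
          unfold fct eps
          rw [mul_add, mul_sub, mul_one, ← map_mul, mul_smul_comm, Finset.mul_sum]
          simp only [← map_mul]
        rw [hpia, ← mul_assoc, hexp, add_mul, sub_mul, smul_mul_assoc, Finset.sum_mul]
        have e1 : MonoidAlgebra.of K M (z * h) * pia K w t
            = MonoidAlgebra.of K M (w x * h) * pia K w t :=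
          ihzh (z * h) (by rw [w_mul hreg hld hR w hw, hz, hwh])
        have e2 : ∀ g ∈ Ge w h, MonoidAlgebra.of K M (z * g) * pia K w t
            = MonoidAlgebra.of K M (w x * h) * pia K w t := fun g hgm =>
          ihzh (z * g) (by rw [w_mul hreg hld hR w hw, hz, mem_Ge.mp hgm])
        rw [ihz, e1, Finset.sum_congr rfl e2, Finset.sum_const,
          ← Nat.cast_smul_eq_nsmul K, smul_smul, inv_mul_cancel₀ (hc h hidh), one_smul]
        abel
      rw [key x rfl, key y hxy.symm]

end Alg

end Stmt17Aux

open Stmt17Aux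

/-- Let `M` be a finite left regular band of groups with set of idempotents
`B`.  Then: (i) the map `ψ : M → B`, `m ↦ m^ω` (the unique idempotent positive power of
`m`) is a surjective monoid homomorphism fixing `B` pointwise; (ii) if `K` is a field whose
characteristic divides the order of no maximal subgroup (unit group of `eMe`) of `M`, then
`KB`, regarded as a `KM`-module via the algebra map `KM → KB` induced by `ψ`, is a
projective `KM`-module. -/
theorem stmt_17 (M : Type) [Monoid M] [Fintype M] (K : Type) [Field K]
    (hreg : ∀ a : M, ∃ x : M, a * x * a = a)
    (hld : ∀ m x : M, ∃ y : M, m * x = y * m)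
    (hR : ∀ a b c : M,
      {x : M | ∃ y : M, x = a * y} = {x : M | ∃ y : M, x = b * y} →
      {x : M | ∃ y : M, x = a * c * y} = {x : M | ∃ y : M, x = b * c * y})
    (w : M → M)
    (hw : ∀ m : M, ∃ n : ℕ, 1 ≤ n ∧ w m = m ^ n ∧ IsIdempotentElem (w m)) :
    (∀ m m' : M, w (m * m') = w m * w m') ∧
      (w 1 = 1) ∧
      (∀ e : M, IsIdempotentElem e → w e = e) ∧
      (Set.range w = {x : M | IsIdempotentElem x}) ∧
      ((∀ e : M, IsIdempotentElem e →
          (Nat.card {x : M // e * x * e = x ∧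
            ∃ y : M, e * y * e = y ∧ x * y = e ∧ y * x = e} : K) ≠ 0) →
        ∀ B : Submonoid M, (B : Set M) = {x : M | IsIdempotentElem x} →
        ∀ Φ : MonoidAlgebra K M →ₐ[K] MonoidAlgebra K ↥B,
          (∀ (m : M) (h : w m ∈ B),
            Φ (MonoidAlgebra.of K M m) = MonoidAlgebra.of K ↥B ⟨w m, h⟩) →
          (letI : Module (MonoidAlgebra K M) (MonoidAlgebra K ↥B) :=
            Module.compHom (MonoidAlgebra K ↥B) Φ.toRingHom
           Module.Projective (MonoidAlgebra K M) (MonoidAlgebra K ↥B))) := by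
  have hR' : ∀ a b c : M, rs a = rs b → rs (a * c) = rs (b * c) := hR
  refine ⟨fun m m' => w_mul hreg hld hR' w hw m m', ?_, fun e he => w_fix w hw he, ?_, ?_⟩
  · obtain ⟨n, hn, h1, _⟩ := hw 1
    rw [h1, one_pow]
  · ext x
    constructor
    · rintro ⟨m, rfl⟩
      exact w_idem w hw m
    · intro hx
      exact ⟨x, w_fix w hw hx⟩
  · intro hchar B hB Φ hΦ
    classical
    have hBmemI : ∀ x : M, IsIdempotentElem x → x ∈ B := by
      intro x hx
      rw [← SetLike.mem_coe, hB]
      exact hx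
    have hc : ∀ e : M, IsIdempotentElem e → ((Ge w e).card : K) ≠ 0 := by
      intro e he
      have h0 := hchar e he
      have hcards : Nat.card {x : M // e * x * e = x ∧
          ∃ y : M, e * y * e = y ∧ x * y = e ∧ y * x = e} = (Ge w e).card := by
        rw [Nat.card_eq_fintype_card, Fintype.card_subtype]
        congr 1
        ext g
        simp only [Finset.mem_filter, Finset.mem_univ, true_and, mem_Ge]
        exact memU_iff hreg hld hR' w hw he g
      rw [hcards] at h0
      exact h0
    obtain ⟨l, hgood, hcomplete⟩ := exists_good_list hld
    set A := MonoidAlgebra K M with hA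
    set N := MonoidAlgebra K ↥B with hN
    set η : A := pia K w l with hη
    have Aprop : ∀ m : M, MonoidAlgebra.of K M m * η = MonoidAlgebra.of K M (w m) * η := by
      intro m
      exact pia_absorb K hreg hld hR' w hw hc l hgood m (w m)
        (w_fix w hw (w_idem w hw m)).symm (hcomplete (w m) (w_idem w hw m))
    set ι : N →ₐ[K] A :=
      (MonoidAlgebra.lift K A ↥B) ((MonoidAlgebra.of K M).comp B.subtype) with hιdef
    have hι : ∀ b : ↥B, ι (MonoidAlgebra.of K ↥B b) = MonoidAlgebra.of K M (b : M) := by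
      intro b
      rw [hιdef, MonoidAlgebra.lift_of]
      rfl
    have hBidem : ∀ b : ↥B, IsIdempotentElem (b : M) := by
      intro b
      have := b.2
      rw [← SetLike.mem_coe, hB] at this
      exact this
    have Cprop : ∀ x : N, Φ (ι x) = x := by
      have hcomp : Φ.comp ι = AlgHom.id K N := by
        apply MonoidAlgebra.algHom_ext
        intro b
        have hwb : w (b : M) = (b : M) := w_fix w hw (hBidem b)
        have hwbB : w (b : M) ∈ B := by rw [hwb]; exact b.2
        show Φ (ι (MonoidAlgebra.of K ↥B b)) = MonoidAlgebra.of K ↥B b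
        rw [hι, hΦ (b : M) hwbB]
        congr 1
        exact Subtype.ext hwb
        exact Subsingleton.elim _ _
      intro x
      exact DFunLike.congr_fun hcomp x
    have hfct : ∀ e : M, IsIdempotentElem e → Φ (fct K w e) = 1 := by
      intro e he
      have heB : e ∈ B := hBmemI e he
      have hwe : w e ∈ B := by rw [w_fix w hw he]; exact heB
      have h1 : Φ (MonoidAlgebra.of K M e) = MonoidAlgebra.of K ↥B ⟨e, heB⟩ := by
        rw [hΦ e hwe]
        congr 1
        exact Subtype.ext (w_fix w hw he)
      have h2 : ∀ g ∈ Ge w e, Φ (MonoidAlgebra.of K M g)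
          = MonoidAlgebra.of K ↥B ⟨e, heB⟩ := by
        intro g hg
        have hwg : w g = e := mem_Ge.mp hg
        have hwgB : w g ∈ B := by rw [hwg]; exact heB
        rw [hΦ g hwgB]
        congr 1
        exact Subtype.ext hwg
      show Φ (1 - MonoidAlgebra.of K M e + eps K w e) = 1
      rw [map_add, map_sub, map_one]
      show (1 : N) - Φ (MonoidAlgebra.of K M e)
          + Φ (((Ge w e).card : K)⁻¹ • ∑ g ∈ Ge w e, MonoidAlgebra.of K M g) = 1
      rw [map_smul, map_sum, h1, Finset.sum_congr rfl h2, Finset.sum_const,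
        ← Nat.cast_smul_eq_nsmul K, smul_smul, inv_mul_cancel₀ (hc e he), one_smul]
      abel
    have Bprop : Φ η = 1 := by
      rw [hη]
      have : ∀ l' : List M, (∀ e ∈ l', IsIdempotentElem e) → Φ (pia K w l') = 1 := by
        intro l'
        induction l' with
        | nil => intro _; show Φ 1 = 1; exact map_one Φ
        | cons h t ih =>
          intro hmem
          show Φ (fct K w h * pia K w t) = 1
          rw [map_mul, hfct h (hmem h (List.mem_cons_self)),
            ih (fun e he => hmem e (List.mem_cons_of_mem h he)), one_mul]
      exact this l (good_mem_idem hgood)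
    have Lprop : ∀ a : A, ι (Φ a) * η = a * η := by
      intro a
      induction a using MonoidAlgebra.induction_on with
      | of m =>
        have hwmB : w m ∈ B := hBmemI (w m) (w_idem w hw m)
        rw [hΦ m hwmB, hι]
        exact (Aprop m).symm
      | add f g hf hg => rw [map_add, map_add, add_mul, add_mul, hf, hg]
      | smul r f hf => rw [map_smul, map_smul, smul_mul_assoc, smul_mul_assoc, hf]
    letI : Module A N := Module.compHom N Φ.toRingHom
    show Module.Projective A N
    let p : A →ₗ[A] N :=
      { toFun := fun a => Φ a
        map_add' := fun a b => map_add Φ a b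
        map_smul' := fun a b => by
          show Φ (a * b) = Φ a * Φ b
          exact map_mul Φ a b }
    let s : N →ₗ[A] A :=
      { toFun := fun x => ι x * η
        map_add' := fun x y => by
          show ι (x + y) * η = ι x * η + ι y * η
          rw [map_add, add_mul]
        map_smul' := fun a x => by
          show ι (Φ a * x) * η = a * (ι x * η)
          have h := Lprop (a * ι x)
          rw [map_mul, Cprop] at h
          rw [h, mul_assoc] }
    have hsplit : p.comp s = LinearMap.id := by
      apply LinearMap.ext
      intro x
      show Φ (ι x * η) = x
      rw [map_mul, Cprop, Bprop, mul_one]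
    exact Module.Projective.of_split s p hsplit
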